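/- Fix positive reals c_0,...,c_{N-1} and M ≥ N ≥ 1. For u ∈ C^N with pairwise distinct coordinates, the matrix h_c[u u*] = Σ_{j=0}^{N-1} c_j (u u*)^{∘j} is invertible, and (u^{∘M})* h_c[u u*]^{-1} u^{∘M} = Σ_{j=0}^{N-1} |s_{μ(M,N,j)}(u)|^2 / c_j. -/

import Mathlib

open Matrix BigOperators

/-- Complete homogeneous symmetric polynomial `h_k`, as a function of a point `x ∈ F^N`. -/
def hfun {F : Type*} [CommRing F] {N : ℕ} (x : Fin N → F) (k : ℕ) : F :=
  ∑ d ∈ Finset.univ.filter (fun d : Fin N → Fin (k + 1) => ∑ i, (d i : ℕ) = k),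
    ∏ i, x i ^ (d i : ℕ)

/-- Schur polynomial (via the Jacobi–Trudi identity) of the partition `lam`,
evaluated at the point `x ∈ F^N`. -/
def schurAt {F : Type*} [CommRing F] {N : ℕ} (x : Fin N → F) (lam : Fin N → ℕ) : F :=
  Matrix.det (Matrix.of fun i j : Fin N =>
    if (i : ℕ) ≤ lam i + (j : ℕ) then hfun x (lam i + (j : ℕ) - (i : ℕ)) else 0)

/-- The hook partition `μ(M,N,j) = (M-N+1, 1^{N-j-1}, 0^j)`. -/
def hookP (M N j : ℕ) : Fin N → ℕ :=
  fun i => if (i : ℕ) = 0 then M - N + 1 else if (i : ℕ) < N - j then 1 else 0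

/-- Vandermonde determinant `Δ_N(x) = ∏_{i<j} (x_i - x_j)`. -/
def vdm {F : Type*} [CommRing F] {N : ℕ} (x : Fin N → F) : F :=
  ∏ i : Fin N, ∏ j ∈ Finset.Ioi i, (x i - x j)


namespace RRSaux
variable {R : Type*} [CommRing R]

def Hl : List R → ℕ → R
  | _, 0 => 1
  | [], _ + 1 => 0
  | a :: l, k + 1 => ∑ m ∈ Finset.range (k + 2), a ^ m * Hl l (k + 1 - m)

def El : List R → ℕ → R
  | _, 0 => 1
  | [], _ + 1 => 0
  | a :: l, k + 1 => El l (k + 1) + a * El l k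

@[simp] lemma Hl_zero (l : List R) : Hl l 0 = 1 := by cases l <;> rfl
@[simp] lemma El_zero (l : List R) : El l 0 = 1 := by cases l <;> rfl
@[simp] lemma Hl_nil_succ (k : ℕ) : Hl ([] : List R) (k + 1) = 0 := rfl
@[simp] lemma El_nil_succ (k : ℕ) : El ([] : List R) (k + 1) = 0 := rfl

lemma Hl_cons (a : R) (l : List R) (k : ℕ) :
    Hl (a :: l) k = ∑ m ∈ Finset.range (k + 1), a ^ m * Hl l (k - m) := by
  cases k with
  | zero => simp
  | succ k => rfl

lemma Hl_cons_succ (a : R) (l : List R) (k : ℕ) :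
    Hl (a :: l) (k + 1) = Hl l (k + 1) + a * Hl (a :: l) k := by
  rw [Hl_cons, Hl_cons, Finset.sum_range_succ' _ (k + 1)]
  simp only [pow_zero, one_mul, Nat.sub_zero, pow_succ]
  rw [add_comm, Finset.mul_sum]
  congr 1
  apply Finset.sum_congr rfl
  intro m hm
  ring_nf
  congr 2
  omega

lemma El_eq_zero (l : List R) (k : ℕ) (h : l.length < k) : El l k = 0 := by
  induction l generalizing k with
  | nil => cases k with
    | zero => simp at h
    | succ k => simp
  | cons a t ih =>
    cases k with
    | zero => simp at h
    | succ k =>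
      simp only [List.length_cons] at h
      rw [El, ih _ (by omega), ih _ (by omega)]
      ring

open PowerSeries

/-- The generating series of `Hl l`. -/
noncomputable def hs (l : List R) : PowerSeries R := PowerSeries.mk (Hl l)

/-- The generating series of `(-1)^k El l k`. -/
noncomputable def es (l : List R) : PowerSeries R :=
  PowerSeries.mk fun k => (-1 : R) ^ k * El l k

@[simp] lemma hs_nil : hs ([] : List R) = 1 := by
  ext n
  cases n <;> simp [hs, coeff_one]

@[simp] lemma es_nil : es ([] : List R) = 1 := by
  ext n
  cases n <;> simp [es, coeff_one]

lemma es_cons (a : R) (l : List R) :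
    es (a :: l) = es l * (1 - C a * X) := by
  ext n
  rw [mul_sub, mul_one, map_sub]
  rw [mul_comm (es l) _, mul_assoc, ← smul_eq_C_mul]
  cases n with
  | zero => simp [es]
  | succ n =>
    rw [LinearMap.map_smul, coeff_succ_X_mul]
    simp only [es, coeff_mk, smul_eq_mul, El]
    ring

lemma hs_cons (a : R) (l : List R) :
    (1 - C a * X) * hs (a :: l) = hs l := by
  ext n
  rw [sub_mul, one_mul, map_sub, mul_assoc, ← smul_eq_C_mul, LinearMap.map_smul]
  cases n with
  | zero => simp [hs]
  | succ n =>
    rw [coeff_succ_X_mul]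
    simp only [hs, coeff_mk, smul_eq_mul, Hl_cons_succ]
    ring

lemma es_mul_hs (l : List R) : es l * hs l = 1 := by
  induction l with
  | nil => simp
  | cons a t ih =>
    calc es (a :: t) * hs (a :: t) = es t * ((1 - C a * X) * hs (a :: t)) := by
          rw [es_cons]; ring
      _ = 1 := by rw [hs_cons, ih]

/-- geometric series -/
lemma one_sub_mul_geo (a : R) :
    (1 - C a * X) * PowerSeries.mk (fun n => a ^ n) = 1 := by
  ext n
  rw [sub_mul, one_mul, map_sub, mul_assoc, ← smul_eq_C_mul, LinearMap.map_smul]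
  cases n with
  | zero => simp [coeff_one]
  | succ n =>
    rw [coeff_succ_X_mul]
    simp [coeff_one, pow_succ, mul_comm]

/-- Key identity: with `a` prepended, `es l * hs (a :: l)` is the geometric series in `a`. -/
lemma es_mul_hs_cons (a : R) (l : List R) :
    es l * hs (a :: l) = PowerSeries.mk (fun n => a ^ n) := by
  have h1 : (1 - C a * X) * (es l * hs (a :: l)) = 1 := by
    calc (1 - C a * X) * (es l * hs (a :: l))
        = es l * ((1 - C a * X) * hs (a :: l)) := by ring
      _ = 1 := by rw [hs_cons, es_mul_hs]
  have h2 := one_sub_mul_geo a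
  calc es l * hs (a :: l)
      = (es l * hs (a :: l)) * ((1 - C a * X) * PowerSeries.mk (fun n => a ^ n)) := by
        rw [h2, mul_one]
    _ = ((1 - C a * X) * (es l * hs (a :: l))) * PowerSeries.mk (fun n => a ^ n) := by ring
    _ = PowerSeries.mk (fun n => a ^ n) := by rw [h1, one_mul]




variable {R : Type*} [CommRing R]

lemma es_eq_prod (l : List R) : es l = (l.map fun a => 1 - C a * X).prod := by
  induction l with
  | nil => simp
  | cons a t ih => rw [List.map_cons, List.prod_cons, es_cons, ih, mul_comm]

lemma es_perm {l₁ l₂ : List R} (h : l₁.Perm l₂) : es l₁ = es l₂ := by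
  rw [es_eq_prod, es_eq_prod]
  exact (h.map _).prod_eq

lemma hs_perm {l₁ l₂ : List R} (h : l₁.Perm l₂) : hs l₁ = hs l₂ := by
  calc hs l₁ = hs l₁ * (es l₂ * hs l₂) := by rw [es_mul_hs, mul_one]
    _ = (es l₁ * hs l₁) * hs l₂ := by rw [es_perm h]; ring
    _ = hs l₂ := by rw [es_mul_hs, one_mul]

lemma Hl_perm {l₁ l₂ : List R} (h : l₁.Perm l₂) (k : ℕ) : Hl l₁ k = Hl l₂ k := by
  have := congrArg (PowerSeries.coeff k) (hs_perm h)
  simpa [hs] using this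

lemma key_sum (a : R) (l : List R) (d : ℕ) :
    ∑ k ∈ Finset.range (d + 1), (-1 : R) ^ k * El l k * Hl (a :: l) (d - k) = a ^ d := by
  have h := congrArg (PowerSeries.coeff d) (es_mul_hs_cons a l)
  rw [PowerSeries.coeff_mul, PowerSeries.coeff_mk,
    Finset.Nat.sum_antidiagonal_eq_sum_range_succ_mk] at h
  simpa [es, hs, mul_assoc] using h

lemma key_sum' (a : R) (l : List R) (d N : ℕ) (hN : l.length < N) :
    ∑ k ∈ Finset.range N,
      (if k ≤ d then (-1 : R) ^ k * El l k * Hl (a :: l) (d - k) else 0) = a ^ d := by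
  set f : ℕ → R := fun k => if k ≤ d then (-1 : R) ^ k * El l k * Hl (a :: l) (d - k) else 0
    with hf
  have h1 : ∑ k ∈ Finset.range N, f k = ∑ k ∈ Finset.range (max N (d + 1)), f k := by
    apply Finset.sum_subset
    · exact Finset.range_subset_range.2 (le_max_left _ _)
    · intro k _ hk
      simp only [Finset.mem_range, not_lt] at hk
      simp only [hf]
      rw [El_eq_zero l k (by omega)]
      simp
  have h2 : ∑ k ∈ Finset.range (d + 1), f k = ∑ k ∈ Finset.range (max N (d + 1)), f k := by
    apply Finset.sum_subset
    · exact Finset.range_subset_range.2 (le_max_right _ _)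
    · intro k _ hk
      simp only [Finset.mem_range, not_lt] at hk
      simp only [hf, if_neg (by omega : ¬ k ≤ d)]
  have h3 : ∑ k ∈ Finset.range (d + 1), f k = a ^ d := by
    rw [← key_sum a l d]
    exact Finset.sum_congr rfl fun k hk => by
      simp only [hf, if_pos (by simpa using Nat.lt_succ_iff.mp (Finset.mem_range.1 hk))]
  rw [h1, ← h2, h3]

lemma perm_fact [DecidableEq R] {N : ℕ} (x : Fin N → R) (r : Fin N) :
    (List.ofFn x).Perm (x r :: (List.ofFn x).eraseIdx (r : ℕ)) := by
  have hr : (r : ℕ) < (List.ofFn x).length := by simp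
  have h1 : (List.ofFn x)[(r : ℕ)] = x r := by simp
  have h2 := List.perm_cons_erase (l := List.ofFn x) (a := (List.ofFn x)[(r:ℕ)])
    (List.getElem_mem hr)
  rw [h1] at h2
  refine h2.trans (List.Perm.cons _ ?_)
  have := List.erase_getElem (l := List.ofFn x) (i := (r : ℕ)) hr
  rwa [h1] at this




lemma hfun_zero_vars (x : Fin 0 → R) (k : ℕ) :
    hfun x k = if k = 0 then 1 else 0 := by
  rw [hfun]
  rcases Nat.eq_zero_or_pos k with hk | hk
  · subst hk
    rw [if_pos rfl, Finset.filter_true_of_mem (fun d _ => by simp)]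
    simp [Finset.card_univ]
  · rw [if_neg (by omega), Finset.filter_false_of_mem, Finset.sum_empty]
    intro d _
    simp
    omega

lemma hfun_succ {N : ℕ} (x : Fin (N + 1) → R) (k : ℕ) :
    hfun x k = ∑ m ∈ Finset.range (k + 1), x 0 ^ m * hfun (x ∘ Fin.succ) (k - m) := by
  classical
  rw [hfun, ← Finset.sum_fiberwise_of_maps_to
    (g := fun d : Fin (N + 1) → Fin (k + 1) => (d 0 : ℕ)) (t := Finset.range (k + 1))
    (fun d _ => Finset.mem_range.2 (d 0).isLt)]
  refine Finset.sum_congr rfl fun m hm => ?_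
  have hmk : m ≤ k := Nat.lt_succ_iff.mp (Finset.mem_range.1 hm)
  rw [hfun, Finset.mul_sum]
  refine Finset.sum_bij'
    (i := fun d hd => fun i : Fin N => (⟨(d i.succ : ℕ), by
      simp only [Finset.mem_filter, Finset.mem_univ, true_and] at hd
      obtain ⟨h1, h2⟩ := hd
      rw [Fin.sum_univ_succ] at h1
      have hle : (d i.succ : ℕ) ≤ ∑ i : Fin N, (d i.succ : ℕ) :=
        Finset.single_le_sum (f := fun i : Fin N => (d i.succ : ℕ)) (fun _ _ => Nat.zero_le _) (Finset.mem_univ i)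
      omega⟩ : Fin (k - m + 1)))
    (j := fun d' hd' => Fin.cons (⟨m, Nat.lt_succ_of_le hmk⟩ : Fin (k + 1))
      (fun i => (⟨(d' i : ℕ), by have := (d' i).isLt; omega⟩ : Fin (k + 1))))
    ?_ ?_ ?_ ?_ ?_
  · intro d hd
    simp only [Finset.mem_filter, Finset.mem_univ, true_and] at hd ⊢
    obtain ⟨h1, h2⟩ := hd
    rw [Fin.sum_univ_succ] at h1
    omega
  · intro d' hd'
    simp only [Finset.mem_filter, Finset.mem_univ, true_and] at hd' ⊢
    constructor
    · rw [Fin.sum_univ_succ]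
      simp only [Fin.cons_zero, Fin.cons_succ]
      omega
    · simp
  · intro d hd
    simp only [Finset.mem_filter, Finset.mem_univ, true_and] at hd
    funext i
    refine Fin.cases ?_ (fun i => ?_) i
    · simp only [Fin.cons_zero]
      exact Fin.ext hd.2.symm
    · simp only [Fin.cons_succ]
  · intro d' hd'
    funext i
    simp only [Fin.cons_succ]
  · intro d hd
    simp only [Finset.mem_filter, Finset.mem_univ, true_and] at hd
    rw [Fin.prod_univ_succ]
    simp only [hd.2]
    rfl


lemma hfun_eq_Hl : ∀ {N : ℕ} (x : Fin N → R) (k : ℕ), hfun x k = Hl (List.ofFn x) k := by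
  intro N
  induction N with
  | zero =>
    intro x k
    rw [hfun_zero_vars, List.ofFn_zero]
    cases k <;> simp [Hl]
  | succ N ih =>
    intro x k
    rw [List.ofFn_succ, Hl_cons, hfun_succ]
    exact Finset.sum_congr rfl fun m _ => by rw [ih]; rfl

@[simp] lemma hfun_zero {N : ℕ} (x : Fin N → R) : hfun x 0 = 1 := by
  rw [hfun_eq_Hl, Hl_zero]


lemma entry_sum {N : ℕ} [DecidableEq R] (x : Fin N → R) (r : Fin N) (i : Fin N) (lam : ℕ) :
    ∑ j : Fin N, (if (i : ℕ) ≤ lam + (j : ℕ) then hfun x (lam + (j : ℕ) - (i : ℕ)) else 0) *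
      ((-1 : R) ^ (N - 1 - (j : ℕ)) * El ((List.ofFn x).eraseIdx (r : ℕ)) (N - 1 - (j : ℕ)))
      = x r ^ (lam + (N - 1) - (i : ℕ)) := by
  set l' := (List.ofFn x).eraseIdx (r : ℕ) with hl'def
  have hrN := r.isLt
  have hiN := i.isLt
  have hl' : l'.length < N := by
    rw [hl'def, List.length_eraseIdx]
    simp only [List.length_ofFn]
    split <;> omega
  have hH : ∀ m, hfun x m = Hl (x r :: l') m := fun m =>
    (hfun_eq_Hl x m).trans (Hl_perm (perm_fact x r) m)
  set d := lam + (N - 1) - (i : ℕ) with hd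
  rw [Fin.sum_univ_eq_sum_range (fun j =>
    (if (i : ℕ) ≤ lam + j then hfun x (lam + j - (i : ℕ)) else 0) *
      ((-1 : R) ^ (N - 1 - j) * El l' (N - 1 - j))) N]
  rw [← Finset.sum_range_reflect, ← key_sum' (x r) l' d N hl']
  apply Finset.sum_congr rfl
  intro k hk
  have hkN : k < N := Finset.mem_range.1 hk
  have e1 : N - 1 - (N - 1 - k) = k := by omega
  rw [e1]
  by_cases h : (i : ℕ) ≤ lam + (N - 1 - k)
  · rw [if_pos h, if_pos (by omega : k ≤ d), hH]
    have e2 : lam + (N - 1 - k) - (i : ℕ) = d - k := by omega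
    rw [e2]
    ring
  · rw [if_neg h, if_neg (by omega : ¬ k ≤ d), zero_mul]

section Mats
variable {N : ℕ} [DecidableEq R]

/-- Jacobi-Trudi matrix. -/
def Jm (x : Fin N → R) (lam : Fin N → ℕ) : Matrix (Fin N) (Fin N) R :=
  Matrix.of fun i j : Fin N =>
    if (i : ℕ) ≤ lam i + (j : ℕ) then hfun x (lam i + (j : ℕ) - (i : ℕ)) else 0

/-- signed elementary symmetric matrix. -/
def Em (x : Fin N → R) : Matrix (Fin N) (Fin N) R :=
  Matrix.of fun j r : Fin N =>
    (-1 : R) ^ (N - 1 - (j : ℕ)) * El ((List.ofFn x).eraseIdx (r : ℕ)) (N - 1 - (j : ℕ))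

/-- generalized Vandermonde matrix. -/
def Av (x : Fin N → R) (lam : Fin N → ℕ) : Matrix (Fin N) (Fin N) R :=
  Matrix.of fun i r : Fin N => x r ^ (lam i + (N - 1) - (i : ℕ))

lemma Jm_mul_Em (x : Fin N → R) (lam : Fin N → ℕ) : Jm x lam * Em x = Av x lam := by
  ext i r
  simp only [Matrix.mul_apply, Jm, Em, Av, Matrix.of_apply]
  exact entry_sum x r i (lam i)

lemma det_Jm_zero (x : Fin N → R) : (Jm (N := N) x fun _ => 0).det = 1 := by
  rw [Matrix.det_of_upperTriangular]
  · rw [Finset.prod_eq_one]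
    intro i _
    simp [Jm]
  · intro i j hji
    simp only [Function.id_def] at hji
    simp only [Jm, Matrix.of_apply, zero_add]
    rw [if_neg (by exact_mod_cast not_le.2 hji)]

lemma schurAt_eq_det (x : Fin N → R) (lam : Fin N → ℕ) : schurAt x lam = (Jm x lam).det := rfl

lemma schur_mul_det (x : Fin N → R) (lam : Fin N → ℕ) :
    schurAt x lam * (Av (N := N) x fun _ => 0).det = (Av x lam).det := by
  have h1 := congrArg Matrix.det (Jm_mul_Em x lam)
  have h0 := congrArg Matrix.det (Jm_mul_Em x (fun _ => 0))
  rw [Matrix.det_mul] at h1 h0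
  rw [det_Jm_zero, one_mul] at h0
  rw [schurAt_eq_det, ← h0, h1]

end Mats
end RRSaux

namespace RRSaux

lemma hook_sigma (N M : ℕ) (hN : 1 ≤ N) (hMN : N ≤ M) (j : Fin N) :
    ∃ σ : Equiv.Perm (Fin N), ∀ i : Fin N,
      (σ i : ℕ) = if (i : ℕ) = 0 then (j : ℕ)
        else (if (i : ℕ) < N - (j : ℕ) then N - (i : ℕ) else N - 1 - (i : ℕ)) := by
  have hj := j.isLt
  set g : Fin N → Fin N := fun i =>
    ⟨if (i : ℕ) = 0 then (j : ℕ)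
      else (if (i : ℕ) < N - (j : ℕ) then N - (i : ℕ) else N - 1 - (i : ℕ)), by
      have := i.isLt
      split_ifs <;> omega⟩ with hg
  have hinj : Function.Injective g := by
    intro i1 i2 h
    have h1 := i1.isLt
    have h2 := i2.isLt
    have h' : (g i1 : ℕ) = (g i2 : ℕ) := congrArg Fin.val h
    simp only [hg] at h'
    apply Fin.ext
    split_ifs at h' <;> omega
  exact ⟨Equiv.ofBijective g (Finite.injective_iff_bijective.mp hinj),
    fun i => by simp [Equiv.ofBijective, hg]⟩

end RRSaux

open RRSaux in
theorem rayleigh_rank_one_schur (N M : ℕ) (hN : 1 ≤ N) (hMN : N ≤ M)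
    (c : Fin N → ℝ) (hc : ∀ j, 0 < c j) (u : Fin N → ℂ) (hu : Function.Injective u) :
    IsUnit (Matrix.det (∑ j : Fin N, (c j : ℂ) •
        Matrix.of fun i k : Fin N => (u i * (starRingEnd ℂ) (u k)) ^ (j : ℕ))) ∧
      dotProduct (star fun i : Fin N => u i ^ M)
        ((∑ j : Fin N, (c j : ℂ) •
            Matrix.of fun i k : Fin N => (u i * (starRingEnd ℂ) (u k)) ^ (j : ℕ))⁻¹.mulVec
          fun i : Fin N => u i ^ M) =
      ((∑ j : Fin N, ‖schurAt u (hookP M N (j : ℕ))‖ ^ 2 / c j : ℝ) : ℂ) := by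
  classical
  set V : Matrix (Fin N) (Fin N) ℂ := Matrix.vandermonde u with hV
  set D : Matrix (Fin N) (Fin N) ℂ := Matrix.diagonal fun j => (c j : ℂ) with hD
  set A : Matrix (Fin N) (Fin N) ℂ := ∑ j : Fin N, (c j : ℂ) •
      Matrix.of fun i k : Fin N => (u i * (starRingEnd ℂ) (u k)) ^ (j : ℕ) with hA
  set b : Fin N → ℂ := fun i => u i ^ M with hb
  have hAVDV : A = V * D * Vᴴ := by
    ext i k
    rw [hA, Matrix.sum_apply]
    rw [Matrix.mul_apply]
    have : ∀ m : Fin N, (V * D) i m = u i ^ (m : ℕ) * (c m : ℂ) := fun m => by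
      rw [Matrix.mul_diagonal, hV, Matrix.vandermonde_apply]
    simp only [this, Matrix.conjTranspose_apply, hV, Matrix.vandermonde_apply,
      Matrix.smul_apply, Matrix.of_apply, smul_eq_mul]
    apply Finset.sum_congr rfl
    intro m _
    rw [mul_pow, ← map_pow, starRingEnd_apply, ← hV, this m]
    ring
  have hdV : V.det ≠ 0 := (Matrix.det_vandermonde_ne_zero_iff).mpr hu
  have hdD : D.det ≠ 0 := by
    rw [hD, Matrix.det_diagonal]
    exact Finset.prod_ne_zero_iff.mpr fun m _ =>
      Complex.ofReal_ne_zero.mpr (hc m).ne'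
  have hdA : A.det ≠ 0 := by
    rw [hAVDV, Matrix.det_mul, Matrix.det_mul, Matrix.det_conjTranspose]
    exact mul_ne_zero (mul_ne_zero hdV hdD) (star_ne_zero.mpr hdV)
  refine ⟨isUnit_iff_ne_zero.mpr hdA, ?_⟩
  -- the quadratic form
  set w : Fin N → ℂ := V⁻¹ *ᵥ b with hw
  have hAinv : A⁻¹ = (Vᴴ)⁻¹ * (D⁻¹ * V⁻¹) := by
    rw [hAVDV, Matrix.mul_inv_rev, Matrix.mul_inv_rev]
  have hDinv : D⁻¹ = Matrix.diagonal fun j => ((c j : ℂ))⁻¹ := by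
    apply Matrix.inv_eq_right_inv
    rw [hD, Matrix.diagonal_mul_diagonal]
    have : (fun i => (c i : ℂ) * ((c i : ℂ))⁻¹) = fun _ : Fin N => (1 : ℂ) :=
      funext fun m => mul_inv_cancel₀ (Complex.ofReal_ne_zero.mpr (hc m).ne')
    rw [this, Matrix.diagonal_one]
  have hquad : dotProduct (star b) (A⁻¹ *ᵥ b)
      = ∑ j : Fin N, (starRingEnd ℂ) (w j) * (((c j : ℂ))⁻¹ * w j) := by
    rw [hAinv, ← Matrix.mulVec_mulVec, dotProduct_mulVec (star b)]
    have hsw : star b ᵥ* (Vᴴ)⁻¹ = star w := by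
      rw [hw, Matrix.star_mulVec, Matrix.conjTranspose_nonsing_inv]
    rw [hsw, ← Matrix.mulVec_mulVec, hDinv]
    rw [dotProduct]
    apply Finset.sum_congr rfl
    intro m _
    rw [Matrix.mulVec_diagonal, Pi.star_apply, starRingEnd_apply]
  rw [hquad]
  -- Cramer's rule for `w`
  have hwj : ∀ j : Fin N, w j = (V.det)⁻¹ * (V.updateCol j b).det := by
    intro j
    have h := Matrix.det_smul_inv_mulVec_eq_cramer V b (isUnit_iff_ne_zero.mpr hdV)
    have h2 := congrFun h j
    rw [Pi.smul_apply, Matrix.cramer_apply, smul_eq_mul] at h2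
    rw [hw, ← h2, inv_mul_cancel_left₀ hdV]
  have hsign : ∀ σ : Equiv.Perm (Fin N),
      ((Equiv.Perm.sign σ : ℤ) : ℂ) * ((Equiv.Perm.sign σ : ℤ) : ℂ) = 1 := by
    intro σ
    rcases Int.units_eq_one_or (Equiv.Perm.sign σ) with h | h <;> rw [h] <;> norm_num
  -- determinant of the reversed Vandermonde
  have hAv0 : Av (N := N) u (fun _ => 0) = (Vᵀ).submatrix Fin.revPerm id := by
    ext i r
    simp only [Av, Matrix.of_apply, Matrix.submatrix_apply, Matrix.transpose_apply, id,
      hV, Matrix.vandermonde_apply, Fin.revPerm_apply, Fin.val_rev]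
    congr 1
    omega
  set s0 : ℂ := ((Equiv.Perm.sign (Fin.revPerm : Equiv.Perm (Fin N)) : ℤ) : ℂ) with hs0def
  have hdet0 : (Av (N := N) u (fun _ => 0)).det = s0 * V.det := by
    rw [hAv0, Matrix.det_permute, Matrix.det_transpose, hs0def]
  -- per-index computation
  have hterm : ∀ j : Fin N, (starRingEnd ℂ) (w j) * (((c j : ℂ))⁻¹ * w j)
      = (‖schurAt u (hookP M N (j : ℕ))‖ ^ 2 / c j : ℝ) := by
    intro j
    obtain ⟨σ, hσ⟩ := hook_sigma N M hN hMN j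
    set Cj : Matrix (Fin N) (Fin N) ℂ := V.updateCol j b with hCj
    have hAvh : Av u (hookP M N (j : ℕ)) = (Cjᵀ).submatrix σ id := by
      ext i r
      have hiN := i.isLt
      have hjN := j.isLt
      simp only [Av, Matrix.of_apply, Matrix.submatrix_apply, Matrix.transpose_apply, id,
        hCj, Matrix.updateCol_apply, hV, Matrix.vandermonde_apply, hb]
      by_cases hi0 : (i : ℕ) = 0
      · have hσi : σ i = j := Fin.ext (by rw [hσ i, if_pos hi0])
        rw [if_pos hσi]
        simp only [hookP, if_pos hi0]
        congr 1
        omega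
      · have hne : σ i ≠ j := by
          intro hEq
          have := congrArg Fin.val hEq
          rw [hσ i, if_neg hi0] at this
          split_ifs at this <;> omega
        rw [if_neg hne, hσ i, if_neg hi0]
        simp only [hookP, if_neg hi0]
        congr 1
        split_ifs <;> omega
    set s1 : ℂ := ((Equiv.Perm.sign σ : ℤ) : ℂ) with hs1def
    have hdeth : (Av u (hookP M N (j : ℕ))).det = s1 * Cj.det := by
      rw [hAvh, Matrix.det_permute, Matrix.det_transpose, hs1def]
    have hschur := schur_mul_det u (hookP M N (j : ℕ))
    rw [hdet0, hdeth] at hschur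
    set sc : ℂ := schurAt u (hookP M N (j : ℕ)) with hsc
    -- Cj.det = s1 * sc * s0 * V.det
    have hCdet : Cj.det = s1 * (sc * (s0 * V.det)) := by
      have := congrArg (fun z => s1 * z) hschur
      rw [hschur, ← mul_assoc, hs1def, hsign σ, one_mul]
    have hwval : w j = s1 * s0 * sc := by
      rw [hwj j, ← hCj, hCdet]
      field_simp
    rw [hwval]
    have habs : (starRingEnd ℂ) sc * sc = ((‖sc‖ ^ 2 : ℝ) : ℂ) := by
      rw [← Complex.normSq_eq_conj_mul_self, Complex.sq_norm]
    calc (starRingEnd ℂ) (s1 * s0 * sc) * (((c j : ℂ))⁻¹ * (s1 * s0 * sc))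
        = (s1 * s1) * ((s0 * s0) * ((starRingEnd ℂ) sc * sc * ((c j : ℂ))⁻¹)) := by
          rw [_root_.map_mul, _root_.map_mul, hs1def, hs0def,
            map_intCast (starRingEnd ℂ), map_intCast (starRingEnd ℂ)]
          ring
      _ = (starRingEnd ℂ) sc * sc * ((c j : ℂ))⁻¹ := by
          rw [hsign σ, hsign (Fin.revPerm : Equiv.Perm (Fin N))]
          ring
      _ = ((‖sc‖ ^ 2 / c j : ℝ) : ℂ) := by
          rw [habs]
          push_cast
          ring
  rw [Finset.sum_congr rfl fun j _ => hterm j]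
  push_cast
  ring
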